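/- The operator L_{−1} := Σ_{α=1}^{n} Σ_{p≥1} T^{α,p}∘∂_{α,p−1} + (1/2)·Σ_{α,β=1}^{n} η_{αβ}·T^{α,0}∘T^{β,0} equals V_{−1} as a linear operator on P. (This is the case j = −1 of the coincidence of the Virasoro operators of the Frobenius manifold of the Coxeter group D_n, expressed in the rescaled time variables, with the operators V_j obtained from vertex operators of the two-component BKP hierarchy.) -/

import Mathlib

open MvPolynomial

noncomputable section

/-- The polynomial algebra over ℚ in variables `t_{2m+1}` (index `(false, m)`) and
`t̂_{2m+1}` (index `(true, m)`). -/
abbrev PP : Type := MvPolynomial (Bool × ℕ) ℚ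

/-- The operator `p_k` (for `b = false`) resp. `p̂_k` (for `b = true`):
`2·∂/∂t_k` for odd positive `k`, multiplication by `(-k)·t_{-k}` for odd negative `k`,
and `0` for even `k`. -/
def pOp (b : Bool) (k : ℤ) : PP → PP := fun q =>
  if 0 < k ∧ Odd k then (2 : ℚ) • pderiv (b, (k.toNat - 1) / 2) q
  else if k < 0 ∧ Odd k then ((-k : ℤ) : ℚ) • (X (b, ((-k).toNat - 1) / 2) * q)
  else 0

/-- The normal-ordered product `:p_a p_c:`, equal to `p_c ∘ p_a` if `a > 0 > c`
and `p_a ∘ p_c` otherwise. -/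
def nord (b : Bool) (a c : ℤ) : PP → PP :=
  if 0 < a ∧ c < 0 then fun q => pOp b c (pOp b a q) else fun q => pOp b a (pOp b c q)

/-- The Virasoro operator
`V_j = (1/(8n-8))·Σ_{i∈ℤ} :p_i p_{(2n-2)j-i}: + (1/8)·Σ_{i∈ℤ} :p̂_i p̂_{2j-i}:
+ δ_{j,0}·(n/24)·(1 + 1/(2n-2))·Id`, acting pointwise (on each polynomial only finitely
many summands act nontrivially). -/
def Vop (n : ℕ) (j : ℤ) : PP → PP := fun q =>
  (8 * (n : ℚ) - 8)⁻¹ • (∑ᶠ i : ℤ, nord false i ((2 * (n : ℤ) - 2) * j - i) q)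
  + (8 : ℚ)⁻¹ • (∑ᶠ i : ℤ, nord true i (2 * j - i) q)
  + (if j = 0 then (n : ℚ) / 24 * (1 + (2 * (n : ℚ) - 2)⁻¹) else 0) • q

/-- For `α ∈ {1,…,n}`, the spectrum `μ_α = (2α-n)/(2n-2)` for `α ≤ n-1` and `μ_n = 0`. -/
def mu (n α : ℕ) : ℚ :=
  if α = n then 0 else (2 * (α : ℚ) - n) / (2 * (n : ℚ) - 2)

/-- The rescaling constants: `c_{α,p} = (2n-2)·∏_{r=0}^{p}((2α-1)/(2n-2)+r)` for
`α ≤ n-1` and `c_{n,p} = 2·∏_{r=0}^{p}(1/2+r)`. -/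
def cc (n α p : ℕ) : ℚ :=
  if α = n then 2 * ∏ r ∈ Finset.range (p + 1), ((1 : ℚ) / 2 + r)
  else (2 * (n : ℚ) - 2) * ∏ r ∈ Finset.range (p + 1), ((2 * (α : ℚ) - 1) / (2 * (n : ℚ) - 2) + r)

/-- The variable corresponding to the time `T^{α,p}`: the variable `t_{(2n-2)p+2α-1}`
(index `(false, (n-1)p+α-1)`) if `α ≤ n-1`, and `t̂_{2p+1}` (index `(true, p)`) if `α = n`. -/
def vIdx (n α p : ℕ) : Bool × ℕ :=
  if α = n then (true, p) else (false, (n - 1) * p + α - 1)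

/-- The operator `T^{α,p}`: multiplication by the rescaled time variable `c_{α,p}·t`. -/
def Tmul (n α p : ℕ) : PP → PP := fun q => cc n α p • (X (vIdx n α p) * q)

/-- The operator `∂_{α,p} = c_{α,p}⁻¹·∂/∂t`, the derivative in the rescaled time variable. -/
def Dop (n α p : ℕ) : PP → PP := fun q => (cc n α p)⁻¹ • pderiv (vIdx n α p) q

/-- The flat metric: `η_{αβ} = 1/(4n-4)` if `α+β = n`, `η_{nn} = 1/4`, and `0` otherwise. -/
def eta (n α β : ℕ) : ℚ :=
  if α + β = n then (4 * (n : ℚ) - 4)⁻¹ else if α = n ∧ β = n then (4 : ℚ)⁻¹ else 0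

/-- The inverse metric: `η^{αβ} = 4n-4` if `α+β = n`, `η^{nn} = 4`, and `0` otherwise. -/
def etaInv (n α β : ℕ) : ℚ :=
  if α + β = n then 4 * (n : ℚ) - 4 else if α = n ∧ β = n then 4 else 0

/-! ### Auxiliary lemmas -/

lemma pOp_apply_zero (b : Bool) (k : ℤ) : pOp b k 0 = 0 := by
  unfold pOp; split_ifs <;> simp

lemma pOp_smul (b : Bool) (k : ℤ) (r : ℚ) (x : PP) : pOp b k (r • x) = r • pOp b k x := by
  unfold pOp; split_ifs <;> simp [map_smul, mul_smul_comm, smul_comm r]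

lemma pOp_pos (b : Bool) (m : ℕ) (x : PP) :
    pOp b ((2 * m + 1 : ℕ) : ℤ) x = (2 : ℚ) • pderiv (b, m) x := by
  have h1 : (0:ℤ) < ((2 * m + 1 : ℕ) : ℤ) := by positivity
  have h2 : Odd ((2 * m + 1 : ℕ) : ℤ) := ⟨m, by push_cast; ring⟩
  unfold pOp
  rw [if_pos ⟨h1, h2⟩]
  have h3 : (((2 * m + 1 : ℕ) : ℤ).toNat - 1) / 2 = m := by omega
  rw [h3]

lemma pOp_neg (b : Bool) (m : ℕ) (x : PP) :
    pOp b (-((2 * m + 1 : ℕ) : ℤ)) x = ((2 * m + 1 : ℕ) : ℚ) • (X (b, m) * x) := by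
  have h1 : ¬ ((0:ℤ) < -((2 * m + 1 : ℕ) : ℤ) ∧ Odd (-((2 * m + 1 : ℕ) : ℤ))) := by
    push_neg; intro h; omega
  have h2 : (-((2 * m + 1 : ℕ) : ℤ)) < 0 := by omega
  have h3 : Odd (-((2 * m + 1 : ℕ) : ℤ)) := by
    rw [Int.odd_iff]; omega
  unfold pOp
  rw [if_neg h1, if_pos ⟨h2, h3⟩]
  have h4 : ((-(-((2 * m + 1 : ℕ) : ℤ))).toNat - 1) / 2 = m := by omega
  have h5 : (((-(-((2 * m + 1 : ℕ) : ℤ))) : ℤ) : ℚ) = ((2 * m + 1 : ℕ) : ℚ) := by push_cast; ring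
  rw [h4, h5]

lemma pOp_even (b : Bool) (k : ℤ) (hk : Even k) (x : PP) : pOp b k x = 0 := by
  have := Int.not_odd_iff_even.mpr hk
  unfold pOp
  rw [if_neg (by tauto), if_neg (by tauto)]

lemma sum_nord (b : Bool) (d N : ℕ) (hd : 1 ≤ d) (q : PP)
    (hN : ∀ m, N ≤ m → pderiv (b, m) q = 0) :
    ∑ᶠ i : ℤ, nord b i (-(2 * (d : ℤ)) - i) q
      = (2 : ℚ) • (∑ m ∈ Finset.range N,
            ((2 * (2 * (m + d) + 1) : ℕ) : ℚ) • (X (b, m + d) * pderiv (b, m) q))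
        + ∑ a ∈ Finset.range d,
            (((2 * a + 1) * (2 * (d - 1 - a) + 1) : ℕ) : ℚ) •
              (X (b, a) * (X (b, d - 1 - a) * q)) := by
  set g : ℤ → PP := fun i => nord b i (-(2 * (d : ℤ)) - i) q with hg
  have f1 : ∀ m : ℕ, g ((2 * m + 1 : ℕ) : ℤ)
      = ((2 * (2 * (m + d) + 1) : ℕ) : ℚ) • (X (b, m + d) * pderiv (b, m) q) := by
    intro m
    have hc : -(2 * (d : ℤ)) - ((2 * m + 1 : ℕ) : ℤ) = -((2 * (m + d) + 1 : ℕ) : ℤ) := by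
      push_cast; ring
    have hcond : (0 : ℤ) < ((2 * m + 1 : ℕ) : ℤ) ∧ -(2 * (d : ℤ)) - ((2 * m + 1 : ℕ) : ℤ) < 0 := by
      constructor <;> omega
    show nord b _ _ q = _
    rw [nord, if_pos hcond, hc, pOp_pos, pOp_smul, pOp_neg, smul_smul]
    congr 1
    push_cast; ring
  have f2 : ∀ m : ℕ, g (-((2 * (m + d) + 1 : ℕ) : ℤ))
      = ((2 * (2 * (m + d) + 1) : ℕ) : ℚ) • (X (b, m + d) * pderiv (b, m) q) := by
    intro m
    have hc : -(2 * (d : ℤ)) - (-((2 * (m + d) + 1 : ℕ) : ℤ)) = ((2 * m + 1 : ℕ) : ℤ) := by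
      push_cast; ring
    have hcond : ¬ ((0 : ℤ) < -((2 * (m + d) + 1 : ℕ) : ℤ) ∧
        -(2 * (d : ℤ)) - (-((2 * (m + d) + 1 : ℕ) : ℤ)) < 0) := by
      push_neg; intro h; omega
    show nord b _ _ q = _
    rw [nord, if_neg hcond, hc, pOp_pos, pOp_smul, pOp_neg, smul_smul]
    congr 1
    push_cast; ring
  have f3 : ∀ a : ℕ, a < d → g (-((2 * a + 1 : ℕ) : ℤ))
      = (((2 * a + 1) * (2 * (d - 1 - a) + 1) : ℕ) : ℚ) • (X (b, a) * (X (b, d - 1 - a) * q)) := by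
    intro a ha
    have hc : -(2 * (d : ℤ)) - (-((2 * a + 1 : ℕ) : ℤ)) = -((2 * (d - 1 - a) + 1 : ℕ) : ℤ) := by
      have : ((d - 1 - a : ℕ) : ℤ) = (d : ℤ) - 1 - a := by omega
      push_cast [this]; ring
    have hcond : ¬ ((0 : ℤ) < -((2 * a + 1 : ℕ) : ℤ) ∧
        -(2 * (d : ℤ)) - (-((2 * a + 1 : ℕ) : ℤ)) < 0) := by
      push_neg; intro h; omega
    show nord b _ _ q = _
    rw [nord, if_neg hcond, hc, pOp_neg b (d - 1 - a), pOp_smul, pOp_neg, smul_smul]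
    congr 1
    push_cast; ring
  have f0 : ∀ i : ℤ, Even i → g i = 0 := by
    intro i hi
    show nord b _ _ q = 0
    rw [nord]
    split_ifs with h
    · show pOp b (-(2 * (d : ℤ)) - i) (pOp b i q) = 0
      rw [pOp_even b i hi, pOp_apply_zero]
    · show pOp b i (pOp b (-(2 * (d : ℤ)) - i) q) = 0
      rw [pOp_even b i hi]
  set A : Finset ℤ := (Finset.range N).image fun m => ((2 * m + 1 : ℕ) : ℤ) with hA
  set B : Finset ℤ := (Finset.range N).image fun m => (-((2 * (m + d) + 1 : ℕ) : ℤ)) with hB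
  set C : Finset ℤ := (Finset.range d).image fun a => (-((2 * a + 1 : ℕ) : ℤ)) with hC
  have hsupp : Function.support g ⊆ ((A ∪ B) ∪ C : Finset ℤ) := by
    intro i hi
    simp only [Function.mem_support] at hi
    rcases Int.even_or_odd i with he | ho
    · exact absurd (f0 i he) hi
    · simp only [Finset.coe_union, Set.mem_union, hA, hB, hC, Finset.coe_image,
        Set.mem_image, Finset.mem_coe, Finset.mem_range]
      rcases lt_trichotomy i 0 with hneg | hz | hpos
      · rcases le_or_gt i (-(2 * (d : ℤ))) with hle | hgt
        · obtain ⟨k, hk⟩ := ho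
          set m : ℕ := (-(i + 1) / 2 - d).toNat with hm
          have him : i = -((2 * (m + d) + 1 : ℕ) : ℤ) := by push_cast; omega
          by_cases hmN : m < N
          · exact Or.inl (Or.inr ⟨m, hmN, him.symm⟩)
          · exfalso
            apply hi
            rw [him, f2 m, hN m (by omega), mul_zero, smul_zero]
        · obtain ⟨k, hk⟩ := ho
          set a : ℕ := (-(i + 1) / 2).toNat with ha
          have hia : i = -((2 * a + 1 : ℕ) : ℤ) := by push_cast; omega
          have had : a < d := by omega
          exact Or.inr ⟨a, had, hia.symm⟩
      · exact absurd (f0 i (hz ▸ Even.zero)) hi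
      · obtain ⟨k, hk⟩ := ho
        set m : ℕ := ((i - 1) / 2).toNat with hm
        have him : i = ((2 * m + 1 : ℕ) : ℤ) := by push_cast; omega
        by_cases hmN : m < N
        · exact Or.inl (Or.inl ⟨m, hmN, him.symm⟩)
        · exfalso
          apply hi
          rw [him, f1 m, hN m (by omega), mul_zero, smul_zero]
  have hAB : Disjoint A B := by
    simp only [Finset.disjoint_left, hA, hB, Finset.mem_image, Finset.mem_range]
    rintro x ⟨m, _, rfl⟩ ⟨m', _, he⟩
    omega
  have hABC : Disjoint (A ∪ B) C := by
    simp only [Finset.disjoint_left, hA, hB, hC, Finset.mem_union, Finset.mem_image,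
      Finset.mem_range]
    rintro x (⟨m, _, rfl⟩ | ⟨m, _, rfl⟩) ⟨a, ha, he⟩ <;> omega
  rw [finsum_eq_sum_of_support_subset g (by exact_mod_cast hsupp),
    Finset.sum_union hABC, Finset.sum_union hAB,
    Finset.sum_image (by intro x _ y _ h; simp only at h; omega),
    Finset.sum_image (by intro x _ y _ h; simp only at h; omega),
    Finset.sum_image (by intro x _ y _ h; simp only at h; omega)]
  rw [Finset.sum_congr rfl fun m _ => f1 m, Finset.sum_congr rfl fun m _ => f2 m,
    Finset.sum_congr rfl fun a ha => f3 a (Finset.mem_range.mp ha), two_smul]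

lemma cc_pos (n α p : ℕ) (hn : 3 ≤ n) (hα : 1 ≤ α) : 0 < cc n α p := by
  have hn' : (0:ℚ) < 2 * (n : ℚ) - 2 := by
    have : (3:ℚ) ≤ (n:ℚ) := by exact_mod_cast hn
    linarith
  have hα' : (1:ℚ) ≤ (α:ℚ) := by exact_mod_cast hα
  unfold cc
  split_ifs
  · apply mul_pos two_pos
    apply Finset.prod_pos
    intro r _
    positivity
  · apply mul_pos hn'
    apply Finset.prod_pos
    intro r _
    have : (0:ℚ) < (2 * (α:ℚ) - 1) / (2 * (n:ℚ) - 2) := by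
      apply div_pos (by linarith) hn'
    positivity

lemma cc_succ (n α p : ℕ) :
    cc n α (p + 1) = cc n α p *
      ((if α = n then (1:ℚ)/2 else (2 * (α : ℚ) - 1) / (2 * (n : ℚ) - 2)) + (p + 1)) := by
  unfold cc
  split_ifs <;> rw [Finset.prod_range_succ] <;> push_cast <;> ring

lemma Tmul_Dop (n α p : ℕ) (hn : 3 ≤ n) (hα : 1 ≤ α) (q : PP) :
    Tmul n α (p + 1) (Dop n α p q)
      = (((if α = n then (1:ℚ)/2 else (2 * (α : ℚ) - 1) / (2 * (n : ℚ) - 2)) + (p + 1))) •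
          (X (vIdx n α (p + 1)) * pderiv (vIdx n α p) q) := by
  unfold Tmul Dop
  rw [mul_smul_comm, smul_smul, cc_succ]
  congr 1
  have h := (cc_pos n α p hn hα).ne'
  field_simp

lemma residue_sum (d N : ℕ) (hd : 1 ≤ d) (h : ℕ → PP) (h0 : ∀ m, N ≤ m → h m = 0) :
    ∑ r ∈ Finset.range d, ∑ᶠ p : ℕ, h (d * p + r) = ∑ m ∈ Finset.range N, h m := by
  have step1 : ∀ r, ∑ᶠ p : ℕ, h (d * p + r) = ∑ p ∈ Finset.range N, h (d * p + r) := by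
    intro r
    apply finsum_eq_sum_of_support_subset
    intro p hp
    simp only [Function.mem_support] at hp
    simp only [Finset.coe_range, Set.mem_Iio]
    by_contra hc
    push_neg at hc
    exact hp (h0 _ (le_trans hc (le_trans (Nat.le_mul_of_pos_left p hd) (Nat.le_add_right _ _))))
  simp only [step1]
  rw [← Finset.sum_product']
  rw [Finset.sum_nbij' (i := fun x : ℕ × ℕ => d * x.2 + x.1) (j := fun m => (m % d, m / d))
    (t := Finset.range (d * N))]
  · refine (Finset.sum_subset (Finset.range_subset_range.mpr (Nat.le_mul_of_pos_left N hd))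
      fun m _ hm => h0 m (by simpa using hm)).symm
  · rintro ⟨r, p⟩ hx
    simp only [Finset.mem_product, Finset.mem_range] at hx
    simp only [Finset.mem_range]
    calc d * p + r < d * p + d := by omega
    _ = d * (p + 1) := by ring
    _ ≤ d * N := Nat.mul_le_mul_left d hx.2
  · intro m hm
    simp only [Finset.mem_range] at hm
    simp only [Finset.mem_product, Finset.mem_range]
    exact ⟨Nat.mod_lt _ hd, Nat.div_lt_iff_lt_mul (by omega) |>.mpr (by rw [mul_comm]; exact hm)⟩
  · rintro ⟨r, p⟩ hx
    simp only [Finset.mem_product, Finset.mem_range] at hx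
    have h1 : (d * p + r) % d = r := by
      rw [add_comm, Nat.add_mul_mod_self_left]; exact Nat.mod_eq_of_lt hx.1
    have h2 : (d * p + r) / d = p := by
      rw [add_comm, Nat.add_mul_div_left _ _ (by omega)]
      rw [Nat.div_eq_of_lt hx.1]; omega
    simp [h1, h2]
  · intro m _
    simp [Nat.div_add_mod]
  · intros; rfl

theorem L_neg_one_eq_V_neg_one (n : ℕ) (hn : 3 ≤ n) (q : PP) :
    (∑ α ∈ Finset.Icc 1 n, ∑ᶠ p : ℕ, Tmul n α (p + 1) (Dop n α p q))
      + (1 / 2 : ℚ) • ∑ α ∈ Finset.Icc 1 n, ∑ β ∈ Finset.Icc 1 n,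
          eta n α β • Tmul n α 0 (Tmul n β 0 q)
      = Vop n (-1) q := by
  -- choose a bound N on the variables of q
  obtain ⟨N, hN⟩ : ∃ N : ℕ, ∀ (b : Bool) (m : ℕ), N ≤ m → pderiv (b, m) q = 0 := by
    refine ⟨(q.vars.image Prod.snd).sup id + 1, fun b m hm => ?_⟩
    apply pderiv_eq_zero_of_notMem_vars
    intro hmem
    have : m ≤ (q.vars.image Prod.snd).sup id :=
      Finset.le_sup (f := id) (Finset.mem_image_of_mem Prod.snd hmem)
    omega
  have h2n : (2 * (n:ℚ) - 2) ≠ 0 := by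
    have : (3:ℚ) ≤ (n:ℚ) := by exact_mod_cast hn
    intro h; linarith
  have h8n : (8 * (n:ℚ) - 8) ≠ 0 := by
    have : (3:ℚ) ≤ (n:ℚ) := by exact_mod_cast hn
    intro h; linarith
  have hcn1 : ((n - 1 : ℕ) : ℚ) = (n : ℚ) - 1 := by
    have : 1 ≤ n := by omega
    push_cast [this]; ring
  -- right hand side
  set Sf : PP := ∑ m ∈ Finset.range N,
      ((2 * (2 * (m + (n-1)) + 1) : ℕ) : ℚ) • (X (false, m + (n-1)) * pderiv (false, m) q)
    with hSf
  set Cf : PP := ∑ a ∈ Finset.range (n-1),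
      (((2 * a + 1) * (2 * ((n-1) - 1 - a) + 1) : ℕ) : ℚ) •
        (X (false, a) * (X (false, (n-1) - 1 - a) * q)) with hCf
  set St : PP := ∑ m ∈ Finset.range N,
      ((2 * (2 * (m + 1) + 1) : ℕ) : ℚ) • (X (true, m + 1) * pderiv (true, m) q) with hSt
  set Ct : PP := ∑ a ∈ Finset.range 1,
      (((2 * a + 1) * (2 * (1 - 1 - a) + 1) : ℕ) : ℚ) •
        (X (true, a) * (X (true, 1 - 1 - a) * q)) with hCt
  have hV : Vop n (-1) q
      = (8 * (n:ℚ) - 8)⁻¹ • ((2:ℚ) • Sf + Cf) + (8:ℚ)⁻¹ • ((2:ℚ) • St + Ct) := by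
    simp only [Vop]
    rw [if_neg (show ¬((-1:ℤ) = 0) by norm_num), zero_smul, add_zero]
    have e1 : (fun i : ℤ => nord false i ((2 * (n : ℤ) - 2) * (-1) - i) q)
        = fun i : ℤ => nord false i (-(2 * ((n-1 : ℕ) : ℤ)) - i) q := by
      funext i
      have e : (2 * (n : ℤ) - 2) * (-1) = -(2 * ((n-1 : ℕ) : ℤ)) := by
        have : ((n - 1 : ℕ) : ℤ) = (n : ℤ) - 1 := by omega
        rw [this]; ring
      rw [e]
    have e2 : (fun i : ℤ => nord true i (2 * (-1) - i) q)
        = fun i : ℤ => nord true i (-(2 * ((1 : ℕ) : ℤ)) - i) q := by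
      funext i
      norm_num
    rw [e1, e2, sum_nord false (n-1) N (by omega) q (hN false),
      sum_nord true 1 N (by omega) q (hN true), hSf, hCf, hSt, hCt]
  -- split off α = n
  have hsplit : Finset.Icc 1 n = insert n (Finset.Icc 1 (n-1)) := by
    ext x; simp only [Finset.mem_Icc, Finset.mem_insert]; omega
  have hnot : n ∉ Finset.Icc 1 (n-1) := by simp only [Finset.mem_Icc]; omega
  -- the α = n linear term
  have hTn : (∑ᶠ p : ℕ, Tmul n n (p+1) (Dop n n p q))
      = ∑ p ∈ Finset.range N, ((1:ℚ)/2 + ((p:ℚ)+1)) • (X (true, p+1) * pderiv (true, p) q) := by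
    have e : ∀ p : ℕ, Tmul n n (p+1) (Dop n n p q)
        = ((1:ℚ)/2 + ((p:ℚ)+1)) • (X (true, p+1) * pderiv (true, p) q) := by
      intro p
      rw [Tmul_Dop n n p hn (by omega)]
      simp [vIdx]
    simp only [e]
    apply finsum_eq_sum_of_support_subset
    intro p hp
    simp only [Function.mem_support] at hp
    simp only [Finset.coe_range, Set.mem_Iio]
    by_contra hc
    push_neg at hc
    exact hp (by rw [hN true p hc, mul_zero, smul_zero])
  -- the α ≤ n-1 linear terms
  set hfun : ℕ → PP := fun m =>
    ((2 * (m:ℚ) + 2 * n - 1) / (2 * (n:ℚ) - 2)) • (X (false, m + (n-1)) * pderiv (false, m) q)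
    with hhfun
  have hfun0 : ∀ m, N ≤ m → hfun m = 0 := by
    intro m hm
    simp only [hhfun]
    rw [hN false m hm, mul_zero, smul_zero]
  have hTα : ∀ α ∈ Finset.Icc 1 (n-1), (∑ᶠ p : ℕ, Tmul n α (p+1) (Dop n α p q))
      = ∑ᶠ p : ℕ, hfun ((n-1) * p + (α - 1)) := by
    intro α hα
    simp only [Finset.mem_Icc] at hα
    have hαn : α ≠ n := by omega
    apply finsum_congr
    intro p
    rw [Tmul_Dop n α p hn (by omega)]
    simp only [vIdx, if_neg hαn, hhfun]
    have hi1 : (n-1) * (p+1) + α - 1 = (n-1)*p + (α-1) + (n-1) := by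
      have : (n-1) * (p+1) = (n-1)*p + (n-1) := by ring
      omega
    have hi2 : (n-1) * p + α - 1 = (n-1)*p + (α-1) := by omega
    rw [hi1, hi2]
    congr 1
    have e2 : ((α - 1 : ℕ):ℚ) = (α:ℚ) - 1 := by
      rw [Nat.cast_sub hα.1]; norm_num
    have hc1 : (((n-1)*p + (α-1) : ℕ) : ℚ) = ((n:ℚ) - 1) * p + ((α:ℚ) - 1) := by
      rw [Nat.cast_add, Nat.cast_mul, hcn1, e2]
    rw [hc1]
    have : (n:ℚ) - 1 ≠ 0 := by intro h; apply h2n; linarith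
    field_simp
    ring
  have hlin2 : ∑ α ∈ Finset.Icc 1 (n-1), ∑ᶠ p : ℕ, hfun ((n-1) * p + (α - 1))
      = ∑ m ∈ Finset.range N, hfun m := by
    rw [← residue_sum (n-1) N (by omega) hfun hfun0]
    apply Finset.sum_nbij' (i := fun α => α - 1) (j := fun r => r + 1)
    · intro a ha
      simp only [Finset.mem_Icc] at ha
      simp only [Finset.mem_range]
      omega
    · intro a ha
      simp only [Finset.mem_range] at ha
      simp only [Finset.mem_Icc]
      omega
    · intro a ha
      simp only [Finset.mem_Icc] at ha
      omega
    · intro a _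
      omega
    · intro a _
      rfl
  -- quadratic part computations
  have hTm0 : ∀ α, 1 ≤ α → α ≤ n-1 → ∀ x : PP,
      Tmul n α 0 x = (2 * (α:ℚ) - 1) • (X (false, α - 1) * x) := by
    intro α h1 h2 x
    have hαn : α ≠ n := by omega
    unfold Tmul
    rw [show vIdx n α 0 = (false, α - 1) from by unfold vIdx; rw [if_neg hαn]; simp]
    congr 1
    unfold cc
    rw [if_neg hαn, Finset.prod_range_one]
    push_cast
    have : (n:ℚ) - 1 ≠ 0 := by intro h; apply h2n; linarith
    field_simp
    ring
  have hTmn0 : ∀ x : PP, Tmul n n 0 x = X (true, 0) * x := by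
    intro x
    unfold Tmul
    rw [show vIdx n n 0 = (true, 0) from by unfold vIdx; rw [if_pos rfl]]
    rw [show cc n n 0 = 1 from by unfold cc; rw [if_pos rfl, Finset.prod_range_one]; norm_num]
    rw [one_smul]
  have hqn : ∑ β ∈ Finset.Icc 1 n, eta n n β • Tmul n n 0 (Tmul n β 0 q)
      = (4:ℚ)⁻¹ • (X (true,0) * (X (true,0) * q)) := by
    rw [Finset.sum_eq_single_of_mem n (by simp only [Finset.mem_Icc]; omega)]
    · rw [hTmn0, hTmn0]
      congr 1
      unfold eta
      rw [if_neg (by omega)]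
      simp
    · intro β hβ hne
      simp only [Finset.mem_Icc] at hβ
      have he : eta n n β = 0 := by
        unfold eta
        rw [if_neg (by omega), if_neg (by intro h; exact hne h.2)]
      rw [he, zero_smul]
  have hqα : ∀ α ∈ Finset.Icc 1 (n-1),
      ∑ β ∈ Finset.Icc 1 n, eta n α β • Tmul n α 0 (Tmul n β 0 q)
      = (4 * (n:ℚ) - 4)⁻¹ • ((2 * (α:ℚ) - 1) •
          (X (false, α - 1) * ((2 * ((n - α : ℕ):ℚ) - 1) • (X (false, n - α - 1) * q)))) := by
    intro α hα
    simp only [Finset.mem_Icc] at hα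
    rw [Finset.sum_eq_single_of_mem (n - α) (by simp only [Finset.mem_Icc]; omega)]
    · rw [hTm0 (n-α) (by omega) (by omega), hTm0 α hα.1 hα.2]
      congr 1
      unfold eta
      rw [if_pos (by omega)]
    · intro β hβ hne
      simp only [Finset.mem_Icc] at hβ
      have he : eta n α β = 0 := by
        unfold eta
        rw [if_neg (by omega), if_neg (by intro h; omega)]
      rw [he, zero_smul]
  have hquad : ∑ α ∈ Finset.Icc 1 n, ∑ β ∈ Finset.Icc 1 n, eta n α β • Tmul n α 0 (Tmul n β 0 q)
      = (∑ α ∈ Finset.Icc 1 (n-1), (4 * (n:ℚ) - 4)⁻¹ • ((2 * (α:ℚ) - 1) •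
          (X (false, α - 1) * ((2 * ((n - α : ℕ):ℚ) - 1) • (X (false, n - α - 1) * q)))))
        + (4:ℚ)⁻¹ • (X (true,0) * (X (true,0) * q)) := by
    have hsp : ∑ α ∈ Finset.Icc 1 n, ∑ β ∈ Finset.Icc 1 n, eta n α β • Tmul n α 0 (Tmul n β 0 q)
        = (∑ β ∈ Finset.Icc 1 n, eta n n β • Tmul n n 0 (Tmul n β 0 q))
          + ∑ α ∈ Finset.Icc 1 (n-1), ∑ β ∈ Finset.Icc 1 n,
              eta n α β • Tmul n α 0 (Tmul n β 0 q) := by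
      rw [hsplit]
      exact Finset.sum_insert hnot
    rw [hsp, hqn, Finset.sum_congr rfl hqα, add_comm]
  -- assemble
  have hlinsp : ∑ α ∈ Finset.Icc 1 n, ∑ᶠ p : ℕ, Tmul n α (p + 1) (Dop n α p q)
      = (∑ᶠ p : ℕ, Tmul n n (p + 1) (Dop n n p q))
        + ∑ α ∈ Finset.Icc 1 (n-1), ∑ᶠ p : ℕ, Tmul n α (p + 1) (Dop n α p q) := by
    rw [hsplit]
    exact Finset.sum_insert hnot
  rw [hV, hquad, hlinsp, hTn, Finset.sum_congr rfl hTα, hlin2]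
  have E1 : ∑ m ∈ Finset.range N, hfun m = (8 * (n:ℚ) - 8)⁻¹ • ((2:ℚ) • Sf) := by
    rw [hSf, Finset.smul_sum, Finset.smul_sum]
    apply Finset.sum_congr rfl
    intro m _
    simp only [hhfun]
    rw [smul_smul, smul_smul]
    congr 1
    push_cast [hcn1]
    field_simp
    ring
  have E2 : ∑ p ∈ Finset.range N, ((1:ℚ)/2 + ((p:ℚ)+1)) • (X (true, p+1) * pderiv (true, p) q)
      = (8:ℚ)⁻¹ • ((2:ℚ) • St) := by
    rw [hSt, Finset.smul_sum, Finset.smul_sum]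
    apply Finset.sum_congr rfl
    intro m _
    rw [smul_smul, smul_smul]
    congr 1
    push_cast
    ring
  have E3 : (1/2 : ℚ) • (∑ α ∈ Finset.Icc 1 (n-1), (4 * (n:ℚ) - 4)⁻¹ • ((2 * (α:ℚ) - 1) •
          (X (false, α - 1) * ((2 * ((n - α : ℕ):ℚ) - 1) • (X (false, n - α - 1) * q)))))
      = (8 * (n:ℚ) - 8)⁻¹ • Cf := by
    rw [hCf, Finset.smul_sum, Finset.smul_sum]
    apply Finset.sum_nbij' (i := fun α => α - 1) (j := fun a => a + 1)
    · intro a ha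
      simp only [Finset.mem_Icc] at ha
      simp only [Finset.mem_range]
      omega
    · intro a ha
      simp only [Finset.mem_range] at ha
      simp only [Finset.mem_Icc]
      omega
    · intro a ha
      simp only [Finset.mem_Icc] at ha
      omega
    · intro a _
      omega
    · intro α hα
      simp only [Finset.mem_Icc] at hα
      have ei : (n-1) - 1 - (α - 1) = n - α - 1 := by omega
      rw [ei]
      rw [mul_smul_comm, smul_smul, smul_smul, smul_smul, smul_smul]
      congr 1
      have c1 : ((2*(α-1)+1 : ℕ) : ℚ) = 2*(α:ℚ) - 1 := by
        rw [show 2*(α-1)+1 = 2*α - 1 from by omega, Nat.cast_sub (by omega)]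
        push_cast
        ring
      have c2 : ((2*(n-α-1)+1 : ℕ) : ℚ) = 2*((n:ℚ) - α) - 1 := by
        rw [show 2*(n-α-1)+1 = 2*n - (2*α+1) from by omega, Nat.cast_sub (by omega)]
        push_cast
        ring
      have c3 : ((n - α : ℕ) : ℚ) = (n:ℚ) - α := by
        rw [Nat.cast_sub (by omega)]
      have key : (1/2:ℚ) * (4*(n:ℚ)-4)⁻¹ = (8*(n:ℚ)-8)⁻¹ := by
        rw [one_div, ← mul_inv]
        congr 1
        ring
      rw [Nat.cast_mul, c1, c2, c3, ← key]
      ring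
  have E4 : (1/2 : ℚ) • ((4:ℚ)⁻¹ • (X (true,0) * (X (true,0) * q)))
      = (8:ℚ)⁻¹ • Ct := by
    rw [hCt, Finset.sum_range_one, smul_smul]
    norm_num
  rw [smul_add (1/2 : ℚ), E1, E2, E3, E4, smul_add ((8 * (n:ℚ) - 8)⁻¹), smul_add ((8:ℚ)⁻¹)]
  abel

end
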